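/- Let E = (E_λ)_{λ∈ℝ} be a bounded spectral family in a complete orthomodular lattice L and define f_E on dual ideals by f_E(J) := inf{λ ∈ ℝ : E_λ ∈ J}. Then for any family (J_j)_{j∈J} of dual ideals, f_E(⋂_j J_j) = sup_j f_E(J_j). -/
import Mathlib


def IsDualIdeal {L : Type} [Lattice L] [OrderBot L] (J : Set L) : Prop :=
  J.Nonempty ∧ ⊥ ∉ J ∧ (∀ a ∈ J, ∀ b ∈ J, a ⊓ b ∈ J) ∧ (∀ a ∈ J, ∀ b : L, a ≤ b → b ∈ J)

class Orthomodular (L : Type) [CompleteLattice L] where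
  compl : L → L
  compl_compl : ∀ x : L, compl (compl x) = x
  compl_antitone : ∀ x y : L, x ≤ y → compl y ≤ compl x
  inf_compl_eq_bot : ∀ x : L, x ⊓ compl x = ⊥
  sup_compl_eq_top : ∀ x : L, x ⊔ compl x = ⊤
  orthomodular : ∀ x y : L, x ≤ y → y = x ⊔ (y ⊓ compl x)

/-- A bounded spectral family in a complete lattice: monotone, right-continuous,
eventually `⊥` to the left and eventually `⊤` to the right. -/
structure SpectralFamily (L : Type) [CompleteLattice L] where
  E : ℝ → L
  mono : Monotone E
  rightCont : ∀ l : ℝ, E l = ⨅ (m : ℝ) (_ : l < m), E m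
  bddBelow : ∃ l : ℝ, E l = ⊥
  bddAbove : ∃ l : ℝ, E l = ⊤

/-- The observable function of a bounded spectral family on dual ideals. -/
noncomputable def obsFun {L : Type} [CompleteLattice L] (E : SpectralFamily L)
    (J : Set L) : ℝ :=
  sInf {l : ℝ | E.E l ∈ J}

theorem stmt3 {L : Type} [CompleteLattice L] [Orthomodular L] (E : SpectralFamily L)
    {ι : Type} [Nonempty ι] (J : ι → Set L) (hJ : ∀ i, IsDualIdeal (J i)) :
    obsFun E (⋂ i, J i) = ⨆ i, obsFun E (J i) := by
  obtain ⟨l0, hl0⟩ := E.bddBelow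
  obtain ⟨l1, hl1⟩ := E.bddAbove
  set S : ι → Set ℝ := fun i => {l : ℝ | E.E l ∈ J i} with hS
  have htopJ : ∀ i, (⊤ : L) ∈ J i := by
    intro i
    obtain ⟨a, ha⟩ := (hJ i).1
    exact (hJ i).2.2.2 a ha ⊤ le_top
  have htop : ∀ i, l1 ∈ S i := by
    intro i; simp only [hS, Set.mem_setOf_eq, hl1]; exact htopJ i
  have hne : ∀ i, (S i).Nonempty := fun i => ⟨l1, htop i⟩
  have hup : ∀ i, ∀ x ∈ S i, ∀ y, x ≤ y → y ∈ S i := by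
    intro i x hx y hxy
    exact (hJ i).2.2.2 _ hx _ (E.mono hxy)
  have hlb : ∀ i, l0 ∈ lowerBounds (S i) := by
    intro i l hl
    by_contra h
    push_neg at h
    have : E.E l ≤ E.E l0 := E.mono h.le
    rw [hl0, le_bot_iff] at this
    exact (hJ i).2.1 (this ▸ hl)
  have hbddS : ∀ i, BddBelow (S i) := fun i => ⟨l0, hlb i⟩
  have hobs : ∀ i, obsFun E (J i) = sInf (S i) := fun i => rfl
  -- The intersection set
  have hSint : {l : ℝ | E.E l ∈ ⋂ i, J i} = ⋂ i, S i := by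
    ext l; simp [hS, Set.mem_iInter]
  have hbddsup : BddAbove (Set.range fun i => obsFun E (J i)) := by
    refine ⟨l1, ?_⟩
    rintro _ ⟨i, rfl⟩
    exact csInf_le (hbddS i) (htop i)
  set s : ℝ := ⨆ i, obsFun E (J i) with hs
  have hsle : ∀ i, obsFun E (J i) ≤ s := fun i => le_ciSup hbddsup i
  have hintne : l1 ∈ ⋂ i, S i := Set.mem_iInter.mpr htop
  have hintbdd : BddBelow (⋂ i, S i) := by
    refine ⟨l0, ?_⟩
    intro l hl
    exact hlb (Classical.arbitrary ι) (Set.mem_iInter.mp hl _)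
  rw [obsFun, hSint]
  apply le_antisymm
  · -- sInf (⋂ S) ≤ s
    apply le_of_forall_pos_le_add
    intro ε hε
    apply csInf_le hintbdd
    rw [Set.mem_iInter]
    intro i
    have h1 : sInf (S i) < s + ε := lt_of_le_of_lt (hsle i) (by linarith)
    obtain ⟨x, hx, hxlt⟩ := exists_lt_of_csInf_lt (hne i) h1
    exact hup i x hx _ hxlt.le
  · -- s ≤ sInf (⋂ S)
    apply ciSup_le
    intro i
    rw [hobs]
    exact csInf_le_csInf (hbddS i) ⟨l1, hintne⟩ (Set.iInter_subset S i)
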